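/- Let (A,μ,α,β) be a BiHom-associative superalgebra with α,β bijective, let R be a Rota-Baxter operator of weight zero on A, let (V,l,r,α_V,β_V) be an A-bimodule with α_V,β_V bijective, and let R_V: V → V be an even Rota-Baxter operator on V relative to R, i.e. α_V∘R_V = R_V∘α_V, β_V∘R_V = R_V∘β_V, l(R(x))R_V(v) = R_V(l(R(x))v + l(x)R_V(v)) and r(R(x))R_V(v) = R_V(r(x)R_V(v) + r(R(x))v) for all homogeneous x ∈ A, v ∈ V. Define l_▷(x)v = l(R(x))v, r_▷(x)v = r(x)(R_V(v)), l_◁(x)v = l(x)(R_V(v)), r_◁(x)v = r(R(x))v. Then (V, l_▷, r_▷, l_◁, r_◁, α_V, β_V) is an A-bimodule of the BiHom-L-dendriform superalgebra (A,▷,◁,α,β) given by x▷y = μ(R(x),y) and x◁y = μ(x,R(y)). -/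

import Mathlib

/-!
STATEMENT 13: Given a BiHom-associative superalgebra `(A,μ,α,β)` (`α, β` bijective), a
Rota-Baxter operator `R` of weight zero on it, an A-bimodule `(V,l,r,α_V,β_V)` with
`α_V, β_V` bijective, and a Rota-Baxter operator `R_V` on `V` relative to `R`, the maps
`l_▷(x)v = l(R(x))v`, `r_▷(x)v = r(x)(R_V(v))`, `l_◁(x)v = l(x)(R_V(v))`,
`r_◁(x)v = r(R(x))v` make `V` an A-bimodule of the BiHom-L-dendriform superalgebra
`(A,▷,◁,α,β)` with `x▷y = μ(R(x),y)`, `x◁y = μ(x,R(y))`.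
-/
theorem statement13
    (K : Type) [Field K] [CharZero K]
    (A : Type) [AddCommGroup A] [Module K A]
    (𝒜 : ZMod 2 → Submodule K A)
    (hA : DirectSum.IsInternal 𝒜)
    (μ : A →ₗ[K] A →ₗ[K] A)
    (α β : A ≃ₗ[K] A)
    (hcomm : ∀ a, α (β a) = β (α a))
    (hαe : ∀ i : ZMod 2, ∀ a ∈ 𝒜 i, α a ∈ 𝒜 i)
    (hβe : ∀ i : ZMod 2, ∀ a ∈ 𝒜 i, β a ∈ 𝒜 i)
    (hμe : ∀ i j : ZMod 2, ∀ a ∈ 𝒜 i, ∀ b ∈ 𝒜 j, μ a b ∈ 𝒜 (i + j))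
    (hαm : ∀ a b : A, α (μ a b) = μ (α a) (α b))
    (hβm : ∀ a b : A, β (μ a b) = μ (β a) (β b))
    (hass : ∀ a b c : A, μ (α a) (μ b c) = μ (μ a b) (β c))
    -- R is a Rota-Baxter operator of weight zero on A
    (R : A →ₗ[K] A)
    (hRe : ∀ i : ZMod 2, ∀ a ∈ 𝒜 i, R a ∈ 𝒜 i)
    (hRα : ∀ a, R (α a) = α (R a))
    (hRβ : ∀ a, R (β a) = β (R a))
    (hRB : ∀ i j : ZMod 2, ∀ x ∈ 𝒜 i, ∀ y ∈ 𝒜 j,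
      μ (R x) (R y) = R (μ (R x) y + μ x (R y)))
    -- the A-bimodule V
    (V : Type) [AddCommGroup V] [Module K V]
    (𝒱 : ZMod 2 → Submodule K V)
    (hV : DirectSum.IsInternal 𝒱)
    (l r : A →ₗ[K] V →ₗ[K] V)
    (αV βV : V ≃ₗ[K] V)
    (hαVe : ∀ k : ZMod 2, ∀ v ∈ 𝒱 k, αV v ∈ 𝒱 k)
    (hβVe : ∀ k : ZMod 2, ∀ v ∈ 𝒱 k, βV v ∈ 𝒱 k)
    (hle : ∀ i k : ZMod 2, ∀ x ∈ 𝒜 i, ∀ v ∈ 𝒱 k, l x v ∈ 𝒱 (i + k))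
    (hre : ∀ i k : ZMod 2, ∀ x ∈ 𝒜 i, ∀ v ∈ 𝒱 k, r x v ∈ 𝒱 (i + k))
    (hb1 : ∀ i j k : ZMod 2, ∀ x ∈ 𝒜 i, ∀ y ∈ 𝒜 j, ∀ v ∈ 𝒱 k,
      l (α x) (l y v) = l (μ x y) (βV v))
    (hb2 : ∀ i j k : ZMod 2, ∀ x ∈ 𝒜 i, ∀ y ∈ 𝒜 j, ∀ v ∈ 𝒱 k,
      l (α x) (r y v) = r (β y) (l x v))
    (hb3 : ∀ i j k : ZMod 2, ∀ x ∈ 𝒜 i, ∀ y ∈ 𝒜 j, ∀ v ∈ 𝒱 k,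
      r (μ x y) (αV v) = r (β y) (r x v))
    (hb4 : ∀ i k : ZMod 2, ∀ x ∈ 𝒜 i, ∀ v ∈ 𝒱 k, l (α x) (αV v) = αV (l x v))
    (hb5 : ∀ i k : ZMod 2, ∀ x ∈ 𝒜 i, ∀ v ∈ 𝒱 k, r (α x) (αV v) = αV (r x v))
    (hb6 : ∀ i k : ZMod 2, ∀ x ∈ 𝒜 i, ∀ v ∈ 𝒱 k, l (β x) (βV v) = βV (l x v))
    (hb7 : ∀ i k : ZMod 2, ∀ x ∈ 𝒜 i, ∀ v ∈ 𝒱 k, r (β x) (βV v) = βV (r x v))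
    -- R_V is an even Rota-Baxter operator on V relative to R
    (RV : V →ₗ[K] V)
    (hRVe : ∀ k : ZMod 2, ∀ v ∈ 𝒱 k, RV v ∈ 𝒱 k)
    (hRVα : ∀ v, RV (αV v) = αV (RV v))
    (hRVβ : ∀ v, RV (βV v) = βV (RV v))
    (hRV1 : ∀ i k : ZMod 2, ∀ x ∈ 𝒜 i, ∀ v ∈ 𝒱 k,
      l (R x) (RV v) = RV (l (R x) v + l x (RV v)))
    (hRV2 : ∀ i k : ZMod 2, ∀ x ∈ 𝒜 i, ∀ v ∈ 𝒱 k,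
      r (R x) (RV v) = RV (r x (RV v) + r (R x) v))
    -- the BiHom-L-dendriform products on A and the derived products
    (tr tl bullet : A → A → A)
    (htr : ∀ a b, tr a b = μ (R a) b)
    (htl : ∀ a b, tl a b = μ a (R b))
    (hbul : ∀ a b, bullet a b = tr a b + tl a b)
    (circ brD : ZMod 2 → ZMod 2 → A → A → A)
    (hcirc : ∀ i j a b, circ i j a b
      = tr a b - ((-1 : K) ^ (i.val * j.val)) • tl (α.symm (β b)) (α (β.symm a)))
    (hbrD : ∀ i j a b, brD i j a b
      = circ i j a b
        - ((-1 : K) ^ (i.val * j.val)) • circ j i (α.symm (β b)) (α (β.symm a)))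
    -- the new actions on V
    (ldr rdr ldl rdl : A → V → V)
    (hldr : ∀ a v, ldr a v = l (R a) v)
    (hrdr : ∀ a v, rdr a v = r a (RV v))
    (hldl : ∀ a v, ldl a v = l a (RV v))
    (hrdl : ∀ a v, rdl a v = r (R a) v) :
    -- the new actions are even
    (∀ i k : ZMod 2, ∀ x ∈ 𝒜 i, ∀ v ∈ 𝒱 k, ldr x v ∈ 𝒱 (i + k))
    ∧ (∀ i k : ZMod 2, ∀ x ∈ 𝒜 i, ∀ v ∈ 𝒱 k, rdr x v ∈ 𝒱 (i + k))
    ∧ (∀ i k : ZMod 2, ∀ x ∈ 𝒜 i, ∀ v ∈ 𝒱 k, ldl x v ∈ 𝒱 (i + k))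
    ∧ (∀ i k : ZMod 2, ∀ x ∈ 𝒜 i, ∀ v ∈ 𝒱 k, rdl x v ∈ 𝒱 (i + k))
    -- (a)
    ∧ (∀ i j : ZMod 2, ∀ x ∈ 𝒜 i, ∀ y ∈ 𝒜 j, ∀ v : V,
        ldr (brD i j (β x) (α y)) (βV v)
          = ldr (α (β x)) (ldr (α y) v)
            - ((-1 : K) ^ (i.val * j.val)) • ldr (α (β y)) (ldr (α x) v))
    -- (b)
    ∧ (∀ i j : ZMod 2, ∀ x ∈ 𝒜 i, ∀ y ∈ 𝒜 j, ∀ v : V,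
        ldl (circ i j (β x) (α y)) (βV v)
          = ldr (α (β x)) (ldl (α y) v)
            - ((-1 : K) ^ (i.val * j.val)) • ldl (α (β y)) (ldl (α x) v)
            - ((-1 : K) ^ (i.val * j.val)) • ldl (α (β y)) (ldr (α x) v))
    -- (c)
    ∧ (∀ i j : ZMod 2, ∀ x ∈ 𝒜 i, ∀ y ∈ 𝒜 j, ∀ v : V,
        rdr (tr (α x) y) (αV (βV v))
          = rdr (β y) (rdr (α x) (βV v)) + rdr (β y) (rdl (α x) (βV v))
            + ((-1 : K) ^ (i.val * j.val)) • ldr (α (β x)) (rdr y (αV v))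
            - ((-1 : K) ^ (i.val * j.val)) • rdr (β y) (ldr (β x) (αV v))
            - ((-1 : K) ^ (i.val * j.val)) • rdr (β y) (ldl (β x) (αV v)))
    -- (d)
    ∧ (∀ i j : ZMod 2, ∀ x ∈ 𝒜 i, ∀ y ∈ 𝒜 j, ∀ v : V,
        rdr (tl (α x) y) (αV (βV v))
          = rdl (β y) (rdr (α x) (βV v))
            + ((-1 : K) ^ (i.val * j.val)) • ldl (α (β x)) (rdr y (αV v))
            + ((-1 : K) ^ (i.val * j.val)) • ldl (α (β x)) (rdl y (αV v))
            - ((-1 : K) ^ (i.val * j.val)) • rdl (β y) (ldl (β x) (αV v)))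
    -- (e)
    ∧ (∀ i j : ZMod 2, ∀ x ∈ 𝒜 i, ∀ y ∈ 𝒜 j, ∀ v : V,
        rdl (bullet (α x) y) (αV (βV v))
          = rdl (β y) (rdl (α x) (βV v))
            - ((-1 : K) ^ (i.val * j.val)) • rdl (β y) (ldr (β x) (αV v))
            + ((-1 : K) ^ (i.val * j.val)) • ldr (α (β x)) (rdl y (αV v))) := by
  have hsq : ∀ n : ℕ, ((-1 : K) ^ n) * ((-1 : K) ^ n) = 1 := by
    intro n; rw [← mul_pow]; norm_num
  have hext : ∀ (P : V → Prop), P 0 → (∀ a b, P a → P b → P (a + b)) →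
      (∀ k, ∀ v ∈ 𝒱 k, P v) → ∀ v, P v := by
    intro P h0 hadd hhom v
    have hv : v ∈ (⊤ : Submodule K V) := trivial
    rw [← hV.submodule_iSup_eq_top] at hv
    exact Submodule.iSup_induction (motive := P) 𝒱 hv hhom h0 hadd
  have hb1' : ∀ i j : ZMod 2, ∀ x ∈ 𝒜 i, ∀ y ∈ 𝒜 j, ∀ v,
      l (α x) (l y v) = l (μ x y) (βV v) := fun i j x hx y hy =>
    hext _ (by simp) (fun a b ha hb => by simp [ha, hb])
      (fun k v hv => hb1 i j k x hx y hy v hv)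
  have hb2' : ∀ i j : ZMod 2, ∀ x ∈ 𝒜 i, ∀ y ∈ 𝒜 j, ∀ v,
      l (α x) (r y v) = r (β y) (l x v) := fun i j x hx y hy =>
    hext _ (by simp) (fun a b ha hb => by simp [ha, hb])
      (fun k v hv => hb2 i j k x hx y hy v hv)
  have hb3' : ∀ i j : ZMod 2, ∀ x ∈ 𝒜 i, ∀ y ∈ 𝒜 j, ∀ v,
      r (μ x y) (αV v) = r (β y) (r x v) := fun i j x hx y hy =>
    hext _ (by simp) (fun a b ha hb => by simp [ha, hb])
      (fun k v hv => hb3 i j k x hx y hy v hv)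
  have hRV1' : ∀ i : ZMod 2, ∀ x ∈ 𝒜 i, ∀ v,
      l (R x) (RV v) = RV (l (R x) v + l x (RV v)) := fun i x hx =>
    hext _ (by simp) (fun a b ha hb => by
      simp only [map_add, ha, hb]; abel)
      (fun k v hv => hRV1 i k x hx v hv)
  have hRV2' : ∀ i : ZMod 2, ∀ x ∈ 𝒜 i, ∀ v,
      r (R x) (RV v) = RV (r x (RV v) + r (R x) v) := fun i x hx =>
    hext _ (by simp) (fun a b ha hb => by
      simp only [map_add, ha, hb]; abel)
      (fun k v hv => hRV2 i k x hx v hv)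
  refine ⟨?_, ?_, ?_, ?_, ?_, ?_, ?_, ?_, ?_⟩
  · intro i k x hx v hv; rw [hldr]; exact hle i k _ (hRe i x hx) v hv
  · intro i k x hx v hv; rw [hrdr]; exact hre i k x hx _ (hRVe k v hv)
  · intro i k x hx v hv; rw [hldl]; exact hle i k x hx _ (hRVe k v hv)
  · intro i k x hx v hv; rw [hrdl]; exact hre i k _ (hRe i x hx) v hv
  -- (a)
  · intro i j x hx y hy v
    have e1 : α.symm (β (α y)) = β y := by
      rw [← hcomm]; exact α.symm_apply_apply _
    have e2 : α (β.symm (β x)) = α x := by rw [β.symm_apply_apply]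
    have e3 : α.symm (β (α x)) = β x := by
      rw [← hcomm]; exact α.symm_apply_apply _
    have e4 : α (β.symm (β y)) = α y := by rw [β.symm_apply_apply]
    have hB : brD i j (β x) (α y)
        = (μ (R (β x)) (α y) + μ (β x) (R (α y)))
          - ((-1 : K) ^ (i.val * j.val)) •
            (μ (R (β y)) (α x) + μ (β y) (R (α x))) := by
      rw [hbrD, e1, e2, hcirc, hcirc, e1, e2, e3, e4]
      simp only [htr, htl]
      rw [mul_comm j.val i.val, smul_sub, smul_smul, hsq, one_smul]
      simp only [smul_add]; abel
    have hR : R (brD i j (β x) (α y))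
        = μ (R (β x)) (R (α y))
          - ((-1 : K) ^ (i.val * j.val)) • μ (R (β y)) (R (α x)) := by
      rw [hB, map_sub, map_smul,
        ← hRB i j (β x) (hβe i x hx) (α y) (hαe j y hy),
        ← hRB j i (β y) (hβe j y hy) (α x) (hαe i x hx)]
    simp only [hldr]
    rw [hR]
    simp only [map_sub, map_smul, LinearMap.sub_apply, LinearMap.smul_apply]
    rw [hRα (β x), hRα (β y),
      hb1' i j (R (β x)) (hRe i _ (hβe i x hx)) (R (α y)) (hRe j _ (hαe j y hy)) v,
      hb1' j i (R (β y)) (hRe j _ (hβe j y hy)) (R (α x)) (hRe i _ (hαe i x hx)) v]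
  -- (b)
  · intro i j x hx y hy v
    have e1 : α.symm (β (α y)) = β y := by
      rw [← hcomm]; exact α.symm_apply_apply _
    have e2 : α (β.symm (β x)) = α x := by rw [β.symm_apply_apply]
    have hC : circ i j (β x) (α y)
        = μ (R (β x)) (α y)
          - ((-1 : K) ^ (i.val * j.val)) • μ (β y) (R (α x)) := by
      rw [hcirc, e1, e2]; simp only [htr, htl]
    simp only [hldl, hldr]
    rw [hC]
    simp only [map_sub, map_smul, LinearMap.sub_apply, LinearMap.smul_apply,
      hRVβ]
    rw [hRα (β x),
      hb1' i j (R (β x)) (hRe i _ (hβe i x hx)) (α y) (hαe j y hy) (RV v),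
      ← hb1' j i (β y) (hβe j y hy) (R (α x)) (hRe i _ (hαe i x hx)) (RV v),
      hRV1' i (α x) (hαe i x hx) v]
    simp only [map_add, smul_add]
    abel
  -- (c)
  · intro i j x hx y hy v
    simp only [hrdr, hrdl, hldr, hldl, htr, hRVα, hRVβ]
    rw [hRα (β x), hb3' i j (R (α x)) (hRe i _ (hαe i x hx)) y hy (βV (RV v))]
    have h2 : r (R (α x)) (βV (RV v))
        = RV (r (α x) (βV (RV v)) + r (R (α x)) (βV v)) := by
      have h := hRV2' i (α x) (hαe i x hx) (βV v)
      rwa [hRVβ] at h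
    rw [h2]
    rw [hb2' i j (R (β x)) (hRe i _ (hβe i x hx)) y hy (αV (RV v))]
    have h3 : l (R (β x)) (αV (RV v))
        = RV (l (R (β x)) (αV v) + l (β x) (αV (RV v))) := by
      have h := hRV1' i (β x) (hβe i x hx) (αV v)
      rwa [hRVα] at h
    rw [h3]
    simp only [map_add, smul_add]
    abel
  -- (d)
  · intro i j x hx y hy v
    simp only [hrdr, hrdl, hldr, hldl, htl, hRVα, hRVβ, hRα, hRβ]
    rw [hb3' i j (α x) (hαe i x hx) (R y) (hRe j y hy) (βV (RV v))]
    rw [← hb2' i j (β x) (hβe i x hx) (R y) (hRe j y hy) (αV (RV v))]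
    have h4 : r (R y) (αV (RV v))
        = RV (r y (αV (RV v)) + r (R y) (αV v)) := by
      have h := hRV2' j y hy (αV v)
      rwa [hRVα] at h
    rw [h4]
    simp only [map_add, smul_add]
    abel
  -- (e)
  · intro i j x hx y hy v
    simp only [hrdr, hrdl, hldr, hldl, hbul, htr, htl, hRVα, hRVβ, hRβ]
    rw [hRα (β x), ← hRB i j (α x) (hαe i x hx) y hy]
    rw [hb3' i j (R (α x)) (hRe i _ (hαe i x hx)) (R y) (hRe j y hy) (βV v)]
    rw [hb2' i j (R (β x)) (hRe i _ (hβe i x hx)) (R y) (hRe j y hy) (αV v),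
      hRβ x]
    abel
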